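/- Let f : ℝ^d → ℝ be twice continuously differentiable and L-smooth, and let K ≥ 1, η > 0 satisfy K η L^{1/2} ≤ 1/4. For each j ∈ {1,…,K}, let 𝔽_j(q,p) := q_j be the position after j leapfrog steps with step size η started at (q,p), and let D₂𝔽_j(q,p) be the Jacobian of p ↦ 𝔽_j(q,p). Then for all q, p ∈ ℝ^d and 1 ≤ j ≤ K: (i) D₂𝔽_j(q,p) = jη I_d − η² Σ_{ℓ=1}^{j−1} (j−ℓ) ∇²f_{𝔽_ℓ(q,p)} D₂𝔽_ℓ(q,p); (ii) ‖D₂𝔽_j(q,p) − jη I_d‖₂ ≤ j³ η³ L; in particular ‖D₂𝔽_K(q,p) − Kη I_d‖₂ ≤ Kη/16. Consequently, for every q the map p ↦ 𝔽_K(q,p) is invertible with inverse 𝔾(q, ·), and every (complex) eigenvalue of the Jacobian D₂𝔾(q,y) has modulus in [16/(17Kη), 16/(15Kη)]. -/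

import Mathlib

set_option maxHeartbeats 1000000


open MeasureTheory Real
open scoped ENNReal NNReal

noncomputable section

/-- The Euclidean space `ℝ^d`. -/
abbrev Euc (d : ℕ) := EuclideanSpace ℝ (Fin d)

/-- `leapfrog f η k (q₀,p₀)` is the `k`-th leapfrog iterate with step size `η` for the
potential `f`, starting at `(q₀,p₀)`. -/
def leapfrog {d : ℕ} (f : Euc d → ℝ) (η : ℝ) : ℕ → Euc d × Euc d → Euc d × Euc d
  | 0, z => z
  | (k+1), z =>
      let w := leapfrog f η k z
      let q' := w.1 + η • w.2 - (η^2/2) • gradient f w.1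
      (q', w.2 - (η/2) • gradient f w.1 - (η/2) • gradient f q')

/-- `f` is `L`-smooth: the Hessian has operator norm at most `L` everywhere. -/
def LSmooth {d : ℕ} (f : Euc d → ℝ) (L : ℝ) : Prop :=
  ∀ x, ‖fderiv ℝ (gradient f) x‖ ≤ L

/-- The entries of the third-derivative tensor of `f` at `x`. -/
def tensor3 {ι : Type*} [Fintype ι] [DecidableEq ι]
    (f : EuclideanSpace ℝ ι → ℝ) (x : EuclideanSpace ℝ ι) (i j k : ι) : ℝ :=
  iteratedFDeriv ℝ 3 f x
    ![EuclideanSpace.single i 1, EuclideanSpace.single j 1, EuclideanSpace.single k 1]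

/-- The `{1,2,3}`-norm (Frobenius norm) of a 3-tensor. -/
def norm123 {ι : Type*} [Fintype ι] (A : ι → ι → ι → ℝ) : ℝ :=
  Real.sqrt (∑ i, ∑ j, ∑ k, (A i j k)^2)

/-- The `{1,2}{3}`-norm of a 3-tensor. -/
def norm12_3 {ι : Type*} [Fintype ι] (A : ι → ι → ι → ℝ) : ℝ :=
  sSup { s | ∃ (X : ι → ι → ℝ) (y : ι → ℝ), (∑ i, ∑ j, (X i j)^2) ≤ 1 ∧
    (∑ k, (y k)^2) ≤ 1 ∧ s = ∑ i, ∑ j, ∑ k, A i j k * X i j * y k }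

/-- `f` is `γ L^{3/2}`-strongly Hessian Lipschitz. -/
def StronglyHessLip {d : ℕ} (f : Euc d → ℝ) (γ L : ℝ) : Prop :=
  ∀ x, norm12_3 (tensor3 f x) ≤ γ * L ^ ((3:ℝ)/2)

/-- Distance between two sets. -/
def setDistance {α : Type*} [PseudoMetricSpace α] (S T : Set α) : ℝ :=
  sInf { r | ∃ x ∈ S, ∃ y ∈ T, r = dist x y }

/-- Cheeger isoperimetric inequality with coefficient `ψ`. -/
def CheegerIso {d : ℕ} (μ : Measure (Euc d)) (ψ : ℝ) : Prop :=
  ∀ S1 S2 S3 : Set (Euc d), MeasurableSet S1 → MeasurableSet S2 → MeasurableSet S3 →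
    Disjoint S1 S2 → Disjoint S1 S3 → Disjoint S2 S3 → S1 ∪ S2 ∪ S3 = Set.univ →
    ψ * setDistance S1 S2 * (μ S1).toReal * (μ S2).toReal ≤ (μ S3).toReal

/-- The probability measure proportional to `e^{-f}`. -/
def targetMeasure {d : ℕ} (f : Euc d → ℝ) : Measure (Euc d) :=
  ((volume.withDensity fun x => ENNReal.ofReal (Real.exp (-f x))) Set.univ)⁻¹ •
    (volume.withDensity fun x => ENNReal.ofReal (Real.exp (-f x)))

/-- The standard Gaussian measure `N(0, I_d)` on `ℝ^d`. -/
def stdGaussian (d : ℕ) : Measure (Euc d) :=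
  Measure.map (⇑(EuclideanSpace.equiv (Fin d) ℝ).symm)
    (Measure.pi fun _ : Fin d => ProbabilityTheory.gaussianReal 0 1)

/-- Metropolis acceptance probability of the HMC proposal. -/
def accProb {d : ℕ} (f : Euc d → ℝ) (K : ℕ) (η : ℝ) (q p : Euc d) : ℝ :=
  min 1 (Real.exp (-(f (leapfrog f η K (q,p)).1) - ‖(leapfrog f η K (q,p)).2‖^2/2
    + f q + ‖p‖^2/2))

/-- One step of Metropolized HMC with `K` leapfrog steps and step size `η`, from `q`. -/
def hmcKernel {d : ℕ} (f : Euc d → ℝ) (K : ℕ) (η : ℝ) (q : Euc d) : Measure (Euc d) :=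
  (stdGaussian d).bind fun p =>
    ENNReal.ofReal (accProb f K η q p) • Measure.dirac (leapfrog f η K (q,p)).1 +
    ENNReal.ofReal (1 - accProb f K η q p) • Measure.dirac q

/-- One step of the lazy version of Metropolized HMC. -/
def lazyHMC {d : ℕ} (f : Euc d → ℝ) (K : ℕ) (η : ℝ) (q : Euc d) : Measure (Euc d) :=
  (2:ℝ≥0∞)⁻¹ • Measure.dirac q + (2:ℝ≥0∞)⁻¹ • hmcKernel f K η q

/-- The law of the lazy Metropolized HMC chain after `n` steps started from `μ₀`. -/
def hmcIter {d : ℕ} (f : Euc d → ℝ) (K : ℕ) (η : ℝ) (μ0 : Measure (Euc d)) :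
    ℕ → Measure (Euc d)
  | 0 => μ0
  | (n+1) => (hmcIter f K η μ0 n).bind (lazyHMC f K η)

/-- Total variation distance between two measures. -/
def tvDist {α : Type*} [MeasurableSpace α] (P Q : Measure α) : ℝ :=
  sSup { r | ∃ A, MeasurableSet A ∧ r = |(P A).toReal - (Q A).toReal| }

/-- `ε`-mixing time of lazy Metropolized HMC started from `μ₀`, targetting `μ ∝ e^{-f}`. -/
def mixingTime {d : ℕ} (f : Euc d → ℝ) (K : ℕ) (η : ℝ) (μ0 : Measure (Euc d)) (ε : ℝ) : ℕ :=
  sInf { n : ℕ | tvDist (hmcIter f K η μ0 n) (targetMeasure f) ≤ ε }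

/-- `μ₀` is `M`-warm with respect to `μ`. -/
def Warm {α : Type*} [MeasurableSpace α] (μ0 μ : Measure α) (M : ℝ) : Prop :=
  ∀ S : Set α, MeasurableSet S → μ0 S ≤ ENNReal.ofReal M * μ S

/-- `e^{-f}` has subexponential tail. -/
def SubexpTail {d : ℕ} (f : Euc d → ℝ) : Prop :=
  ∃ lam > (0:ℝ), Filter.Tendsto (fun x : Euc d => Real.exp (lam * ‖x‖) * Real.exp (-f x))
    (Bornology.cobounded _) (nhds 0)

end

-- ==================== auxiliary lemmas ====================
noncomputable section
namespace LeapfrogAux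

lemma apply_coord {d : ℕ} (T : Euc d →L[ℝ] Euc d) (x : Euc d) (i : Fin d) :
    T x i = ∑ j, T (EuclideanSpace.single j 1) i * x j := by
  have hx : x = ∑ j, x j • EuclideanSpace.single j 1 := by
    have := (EuclideanSpace.basisFun (Fin d) ℝ).sum_repr x
    simpa [EuclideanSpace.basisFun_apply, EuclideanSpace.basisFun_repr] using this.symm
  have : T x i = ((EuclideanSpace.proj i).comp T) (∑ j, x j • EuclideanSpace.single j 1) := by
    rw [← hx]; rfl
  rw [this, map_sum]
  simp [mul_comm]

lemma norm_sq_euc {d : ℕ} (x : Euc d) : ‖x‖^2 = ∑ i, (x i)^2 := by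
  rw [EuclideanSpace.norm_eq, Real.sq_sqrt (by positivity)]
  simp [Real.norm_eq_abs, sq_abs]

lemma spec_abs_le {d : ℕ} (T : Euc d →L[ℝ] Euc d) (C : ℝ) (hC : ∀ x, ‖T x‖ ≤ C * ‖x‖)
    {z : ℂ} (hz : z ∈ spectrum ℂ
      ((Matrix.of fun i j : Fin d => T (EuclideanSpace.single j 1) i).map Complex.ofReal)) :
    ‖z‖ ≤ C := by
  set M : Matrix (Fin d) (Fin d) ℝ := Matrix.of fun i j => T (EuclideanSpace.single j 1) i with hM
  rw [spectrum.mem_iff] at hz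
  have hdet : (z • (1 : Matrix (Fin d) (Fin d) ℂ) - M.map Complex.ofReal).det = 0 := by
    by_contra hne
    exact hz (by
      have := (Matrix.isUnit_iff_isUnit_det _).mpr (isUnit_iff_ne_zero.mpr hne)
      simpa [Algebra.algebraMap_eq_smul_one] using this)
  obtain ⟨v, hv0, hvec⟩ := (Matrix.exists_mulVec_eq_zero_iff).mpr hdet
  have hcomp : ∀ i, ∑ j, (M i j : ℂ) * v j = z * v i := by
    intro i
    have h0 := congrFun hvec i
    simp only [Matrix.sub_mulVec, Matrix.smul_mulVec, Matrix.one_mulVec, Pi.sub_apply,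
      Pi.smul_apply, Pi.zero_apply, sub_eq_zero, smul_eq_mul] at h0
    rw [h0]
    simp [Matrix.mulVec, dotProduct, Matrix.map_apply]
  set a : Euc d := (EuclideanSpace.equiv (Fin d) ℝ).symm (fun i => (v i).re) with haa
  set b : Euc d := (EuclideanSpace.equiv (Fin d) ℝ).symm (fun i => (v i).im) with hbb
  have hai : ∀ i, a i = (v i).re := fun i => rfl
  have hbi : ∀ i, b i = (v i).im := fun i => rfl
  have hTa : ∀ i, T a i = z.re * a i - z.im * b i := by
    intro i
    have hre := congrArg Complex.re (hcomp i)
    simp [Complex.re_sum, Complex.mul_re] at hre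
    rw [apply_coord]
    simpa [hai, hbi, hM, Matrix.of_apply] using hre
  have hTb : ∀ i, T b i = z.re * b i + z.im * a i := by
    intro i
    have him := congrArg Complex.im (hcomp i)
    simp [Complex.im_sum, Complex.mul_im] at him
    rw [apply_coord]
    simpa [hai, hbi, hM, Matrix.of_apply] using him
  have key : ‖T a‖^2 + ‖T b‖^2 = (z.re^2 + z.im^2) * (‖a‖^2 + ‖b‖^2) := by
    rw [norm_sq_euc (T a), norm_sq_euc (T b), norm_sq_euc a, norm_sq_euc b]
    calc (∑ i, (T a i)^2) + ∑ i, (T b i)^2 = ∑ i, ((T a i)^2 + (T b i)^2) :=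
          (Finset.sum_add_distrib).symm
      _ = ∑ i, (z.re^2 + z.im^2) * ((a i)^2 + (b i)^2) := by
          apply Finset.sum_congr rfl
          intro i _
          rw [hTa i, hTb i]; ring
      _ = (z.re^2 + z.im^2) * ((∑ i, (a i)^2) + ∑ i, (b i)^2) := by
          rw [← Finset.sum_add_distrib, Finset.mul_sum]
  have hS : 0 < ‖a‖^2 + ‖b‖^2 := by
    obtain ⟨i, hi⟩ := Function.ne_iff.mp hv0
    have hvi : v i ≠ 0 := by simpa using hi
    have h1 : (a i)^2 + (b i)^2 > 0 := by
      have hab : a i ≠ 0 ∨ b i ≠ 0 := by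
        by_contra hcon
        push_neg at hcon
        exact hvi (Complex.ext (by simpa [hai] using hcon.1) (by simpa [hbi] using hcon.2))
      rcases hab with h' | h'
      · nlinarith [sq_nonneg (b i), pow_pos (abs_pos.mpr h') 2, sq_abs (a i)]
      · nlinarith [sq_nonneg (a i), pow_pos (abs_pos.mpr h') 2, sq_abs (b i)]
    have h2 : (a i)^2 ≤ ‖a‖^2 := by
      rw [norm_sq_euc]
      exact Finset.single_le_sum (fun j _ => sq_nonneg (a j)) (Finset.mem_univ i)
    have h3 : (b i)^2 ≤ ‖b‖^2 := by
      rw [norm_sq_euc]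
      exact Finset.single_le_sum (fun j _ => sq_nonneg (b j)) (Finset.mem_univ i)
    linarith
  have hC0 : 0 ≤ C := by
    rcases lt_or_ge 0 (‖a‖^2) with h | h
    · have := hC a
      nlinarith [norm_nonneg (T a), norm_nonneg a]
    · have hb' : 0 < ‖b‖^2 := by nlinarith [sq_nonneg ‖a‖]
      have := hC b
      nlinarith [norm_nonneg (T b), norm_nonneg b]
  have hsq : z.re^2 + z.im^2 ≤ C^2 := by
    have h1 := hC a
    have h2 := hC b
    nlinarith [norm_nonneg (T a), norm_nonneg (T b), norm_nonneg a, norm_nonneg b]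
  have habs : ‖z‖ = Real.sqrt (z.re^2 + z.im^2) := by
    rw [Complex.norm_def, Complex.normSq_apply]; ring_nf
  rw [habs]
  calc Real.sqrt (z.re^2 + z.im^2) ≤ Real.sqrt (C^2) := Real.sqrt_le_sqrt hsq
    _ = C := Real.sqrt_sq hC0

lemma matrix_inv_pair {d : ℕ} (S T : Euc d →L[ℝ] Euc d) (h : ∀ x, S (T x) = x) :
    (Matrix.of fun i j : Fin d => S (EuclideanSpace.single j 1) i) *
      (Matrix.of fun i j : Fin d => T (EuclideanSpace.single j 1) i) = 1 := by
  ext i j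
  rw [Matrix.mul_apply]
  simp only [Matrix.of_apply]
  rw [show ∑ k, S (EuclideanSpace.single k 1) i * T (EuclideanSpace.single j 1) k
      = S (T (EuclideanSpace.single j 1)) i from (apply_coord S _ i).symm, h]
  rw [EuclideanSpace.single_apply, Matrix.one_apply]

lemma map_ofReal_eq_one {d : ℕ} (MB MA : Matrix (Fin d) (Fin d) ℝ) (h : MB * MA = 1) :
    MB.map Complex.ofReal * MA.map Complex.ofReal = 1 := by
  ext i j
  rw [Matrix.mul_apply]
  simp only [Matrix.map_apply, ← Complex.ofReal_mul, ← Complex.ofReal_sum]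
  rw [← Matrix.mul_apply, h]
  simp [Matrix.one_apply, apply_ite Complex.ofReal]

def dualIso (d : ℕ) : (Euc d →L[ℝ] ℝ) →L[ℝ] Euc d :=
  LinearMap.toContinuousLinearMap
    { toFun := fun ℓ => (InnerProductSpace.toDual ℝ (Euc d)).symm ℓ
      map_add' := fun x y => by simp
      map_smul' := fun c x => by
        simp [LinearIsometryEquiv.map_smulₛₗ, starRingEnd_apply, star_trivial] }

lemma contDiff_gradient {d : ℕ} {f : Euc d → ℝ} (hf : ContDiff ℝ 2 f) :
    ContDiff ℝ 1 (gradient f) :=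
  (dualIso d).contDiff.comp (hf.fderiv_right (by norm_num))

def hess {d : ℕ} (f : Euc d → ℝ) (x : Euc d) : Euc d →L[ℝ] Euc d := fderiv ℝ (gradient f) x

def lfD {d : ℕ} (f : Euc d → ℝ) (η : ℝ) (q p : Euc d) :
    ℕ → (Euc d →L[ℝ] Euc d) × (Euc d →L[ℝ] Euc d)
  | 0 => (0, ContinuousLinearMap.id ℝ (Euc d))
  | (j+1) =>
      let P := lfD f η q p j
      let C := (hess f ((leapfrog f η j (q, p)).1)).comp P.1
      let A1 := P.1 + η • P.2 - (η^2/2) • C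
      (A1, P.2 - (η/2) • C - (η/2) • ((hess f ((leapfrog f η (j+1) (q, p)).1)).comp A1))

def lfC {d : ℕ} (f : Euc d → ℝ) (η : ℝ) (q p : Euc d) (l : ℕ) : Euc d →L[ℝ] Euc d :=
  (hess f ((leapfrog f η l (q, p)).1)).comp (lfD f η q p l).1

lemma lfC_zero {d : ℕ} (f : Euc d → ℝ) (η : ℝ) (q p : Euc d) : lfC f η q p 0 = 0 := by
  simp [lfC, lfD]

lemma lf_hasderiv {d : ℕ} {f : Euc d → ℝ} (hf : ContDiff ℝ 2 f) (η : ℝ) (q : Euc d)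
    (j : ℕ) (p : Euc d) :
    HasStrictFDerivAt (fun p' => (leapfrog f η j (q, p')).1) (lfD f η q p j).1 p ∧
    HasStrictFDerivAt (fun p' => (leapfrog f η j (q, p')).2) (lfD f η q p j).2 p := by
  have hgrad : ∀ x : Euc d, HasStrictFDerivAt (gradient f) (hess f x) x := fun x =>
    ((contDiff_gradient hf).contDiffAt).hasStrictFDerivAt one_ne_zero
  induction j with
  | zero =>
      constructor
      · simpa [leapfrog, lfD] using hasStrictFDerivAt_const q p
      · exact hasStrictFDerivAt_id p
  | succ j ih =>
      have e1 : (fun p' => (leapfrog f η (j+1) (q, p')).1) =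
          fun p' => (leapfrog f η j (q, p')).1 + η • (leapfrog f η j (q, p')).2
            - (η^2/2) • gradient f ((leapfrog f η j (q, p')).1) := by
        funext p'; simp [leapfrog]
      have hgq : HasStrictFDerivAt (fun p' => gradient f ((leapfrog f η j (q, p')).1))
          ((hess f ((leapfrog f η j (q, p)).1)).comp (lfD f η q p j).1) p :=
        (hgrad _).comp p ih.1
      have h1 : HasStrictFDerivAt (fun p' => (leapfrog f η (j+1) (q, p')).1)
          (lfD f η q p (j+1)).1 p := by
        rw [e1]
        have := (ih.1.add (ih.2.const_smul η)).sub (hgq.const_smul (η^2/2))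
        exact this
      refine ⟨h1, ?_⟩
      have e2 : (fun p' => (leapfrog f η (j+1) (q, p')).2) =
          fun p' => (leapfrog f η j (q, p')).2 - (η/2) • gradient f ((leapfrog f η j (q, p')).1)
            - (η/2) • gradient f ((leapfrog f η (j+1) (q, p')).1) := by
        funext p'; simp [leapfrog]
      rw [e2]
      have hgq1 : HasStrictFDerivAt (fun p' => gradient f ((leapfrog f η (j+1) (q, p')).1))
          ((hess f ((leapfrog f η (j+1) (q, p)).1)).comp (lfD f η q p (j+1)).1) p :=
        (hgrad _).comp p h1
      have := (ih.2.sub (hgq.const_smul (η/2))).sub (hgq1.const_smul (η/2))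
      exact this

lemma lfD_closed {d : ℕ} (f : Euc d → ℝ) (η : ℝ) (q p : Euc d) (j : ℕ) :
    (lfD f η q p j).1 = ((j : ℝ) * η) • ContinuousLinearMap.id ℝ (Euc d)
      - η^2 • ∑ l ∈ Finset.Ico 1 j, ((j : ℝ) - (l : ℝ)) • lfC f η q p l ∧
    (lfD f η q p j).2 = ContinuousLinearMap.id ℝ (Euc d) - (η/2) • lfC f η q p j
      - η • ∑ l ∈ Finset.Ico 1 j, lfC f η q p l := by
  induction j with
  | zero =>
      refine ⟨?_, ?_⟩ <;> simp [lfD, lfC_zero] <;> module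
  | succ j ih =>
      have hC1 : (lfD f η q p (j+1)).1 = (lfD f η q p j).1 + η • (lfD f η q p j).2
          - (η^2/2) • lfC f η q p j := by
        simp [lfD, lfC]
      have hC2 : (lfD f η q p (j+1)).2 = (lfD f η q p j).2 - (η/2) • lfC f η q p j
          - (η/2) • lfC f η q p (j+1) := by
        simp only [lfD, lfC]
      rcases Nat.eq_zero_or_pos j with hj | hj
      · subst hj
        constructor
        · rw [hC1, ih.1, ih.2]
          have e0 : Finset.Ico 1 0 = (∅ : Finset ℕ) := rfl
          have e1 : Finset.Ico 1 1 = (∅ : Finset ℕ) := rfl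
          simp only [lfC_zero, zero_add, e0, e1, Finset.sum_empty]
          module
        · rw [hC2, ih.2]
          have e0 : Finset.Ico 1 0 = (∅ : Finset ℕ) := rfl
          have e1 : Finset.Ico 1 1 = (∅ : Finset ℕ) := rfl
          simp only [lfC_zero, zero_add, e0, e1, Finset.sum_empty]
          module
      · have hsum1 : ∑ l ∈ Finset.Ico 1 (j+1), (((j:ℝ)+1) - (l : ℝ)) • lfC f η q p l
            = (∑ l ∈ Finset.Ico 1 j, ((j:ℝ) - (l : ℝ)) • lfC f η q p l)
              + (∑ l ∈ Finset.Ico 1 j, lfC f η q p l) + lfC f η q p j := by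
          rw [Finset.sum_Ico_succ_top hj]
          have : ∀ l ∈ Finset.Ico 1 j, (((j:ℝ)+1) - (l : ℝ)) • lfC f η q p l
              = ((j:ℝ) - (l : ℝ)) • lfC f η q p l + lfC f η q p l := by
            intro l _
            module
          rw [Finset.sum_congr rfl this, Finset.sum_add_distrib]
          simp
      -- now the two statements
        have hsum2 : ∑ l ∈ Finset.Ico 1 (j+1), lfC f η q p l
            = (∑ l ∈ Finset.Ico 1 j, lfC f η q p l) + lfC f η q p j := by
          rw [Finset.sum_Ico_succ_top hj]
        constructor
        · rw [hC1, ih.1, ih.2]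
          push_cast
          rw [hsum1]
          module
        · rw [hC2, ih.2]
          rw [hsum2]
          module

lemma lfD_bound {d : ℕ} (f : Euc d → ℝ) (L η : ℝ) (K : ℕ) (q p : Euc d)
    (hL : ∀ x, ‖hess f x‖ ≤ L) (hL0 : 0 ≤ L) (hη : 0 ≤ η)
    (hsmall : (K:ℝ)^2 * η^2 * L ≤ 1/16) :
    ∀ j, 1 ≤ j → j ≤ K →
      ‖(lfD f η q p j).1 - ((j:ℝ)*η) • ContinuousLinearMap.id ℝ (Euc d)‖
        ≤ (j:ℝ)^3 * η^3 * L := by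
  intro j
  induction j using Nat.strong_induction_on with
  | _ j ih =>
    intro hj1 hjK
    have hAl : ∀ l, 1 ≤ l → l < j → ‖(lfD f η q p l).1‖ ≤ 2*(l:ℝ)*η := by
      intro l hl1 hlj
      have hb := ih l hlj hl1 (le_trans (le_of_lt hlj) hjK)
      have hlK : (l:ℝ) ≤ (K:ℝ) := by
        exact_mod_cast le_trans (le_of_lt hlj) hjK
      have hl1' : (1:ℝ) ≤ (l:ℝ) := by exact_mod_cast hl1
      have hid : ‖(((l:ℝ)*η) • ContinuousLinearMap.id ℝ (Euc d))‖ ≤ (l:ℝ)*η := by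
        have h0 := norm_smul_le ((l:ℝ)*η) (ContinuousLinearMap.id ℝ (Euc d))
        have h1 : ‖ContinuousLinearMap.id ℝ (Euc d)‖ ≤ 1 := ContinuousLinearMap.norm_id_le
        have h2 : ‖(l:ℝ)*η‖ = (l:ℝ)*η := by
          rw [Real.norm_eq_abs, abs_of_nonneg (by positivity)]
        rw [h2] at h0
        nlinarith [norm_nonneg (ContinuousLinearMap.id ℝ (Euc d)),
          (by positivity : (0:ℝ) ≤ (l:ℝ)*η)]
      have tri : ‖(lfD f η q p l).1‖
          ≤ ‖(lfD f η q p l).1 - ((l:ℝ)*η) • ContinuousLinearMap.id ℝ (Euc d)‖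
            + ‖(((l:ℝ)*η) • ContinuousLinearMap.id ℝ (Euc d))‖ := by
        have := norm_sub_norm_le ((lfD f η q p l).1) (((l:ℝ)*η) • ContinuousLinearMap.id ℝ (Euc d))
        nlinarith [norm_nonneg ((lfD f η q p l).1 - ((l:ℝ)*η) • ContinuousLinearMap.id ℝ (Euc d))]
      have hcube : (l:ℝ)^3 * η^3 * L ≤ (l:ℝ)*η := by
        have hlη : 0 ≤ (l:ℝ)*η := by positivity
        have h1 : (l:ℝ)^2*η^2*L ≤ (K:ℝ)^2*η^2*L := by
          have : (l:ℝ)^2 ≤ (K:ℝ)^2 := by nlinarith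
          nlinarith [mul_nonneg (sq_nonneg η) hL0]
        calc (l:ℝ)^3 * η^3 * L = ((l:ℝ)*η) * ((l:ℝ)^2*η^2*L) := by ring
          _ ≤ ((l:ℝ)*η) * (1/16) := mul_le_mul_of_nonneg_left (le_trans h1 hsmall) hlη
          _ ≤ (l:ℝ)*η := by linarith
      linarith
    rw [(lfD_closed f η q p j).1, sub_sub_cancel_left, norm_neg]
    have hterm : ∀ l ∈ Finset.Ico 1 j, ‖((j:ℝ) - (l:ℝ)) • lfC f η q p l‖
        ≤ L * η * (j:ℝ)^2 / 2 := by
      intro l hl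
      rw [Finset.mem_Ico] at hl
      have hl1' : (1:ℝ) ≤ (l:ℝ) := by exact_mod_cast hl.1
      have hlj' : (l:ℝ) < (j:ℝ) := by exact_mod_cast hl.2
      have hCl : ‖lfC f η q p l‖ ≤ L * (2*(l:ℝ)*η) := by
        calc ‖lfC f η q p l‖ ≤ ‖hess f ((leapfrog f η l (q,p)).1)‖ * ‖(lfD f η q p l).1‖ :=
              ContinuousLinearMap.opNorm_comp_le _ _
          _ ≤ L * (2*(l:ℝ)*η) := by
              have := hAl l hl.1 hl.2
              have := hL ((leapfrog f η l (q,p)).1)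
              nlinarith [norm_nonneg (hess f ((leapfrog f η l (q,p)).1)),
                norm_nonneg ((lfD f η q p l).1)]
      have h0 := norm_smul_le ((j:ℝ)-(l:ℝ)) (lfC f η q p l)
      rw [Real.norm_eq_abs, abs_of_nonneg (by linarith)] at h0
      nlinarith [norm_nonneg (lfC f η q p l), mul_nonneg hL0 hη,
        sq_nonneg ((j:ℝ) - 2*(l:ℝ))]
    have hsum : ‖∑ l ∈ Finset.Ico 1 j, ((j:ℝ) - (l:ℝ)) • lfC f η q p l‖
        ≤ (j:ℝ) * (L * η * (j:ℝ)^2 / 2) := by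
      calc ‖∑ l ∈ Finset.Ico 1 j, ((j:ℝ) - (l:ℝ)) • lfC f η q p l‖
          ≤ ∑ l ∈ Finset.Ico 1 j, ‖((j:ℝ) - (l:ℝ)) • lfC f η q p l‖ := norm_sum_le _ _
        _ ≤ ((Finset.Ico 1 j).card : ℝ) * (L * η * (j:ℝ)^2 / 2) := by
            have h1 := Finset.sum_le_card_nsmul (Finset.Ico 1 j)
              (fun l => ‖((j:ℝ) - (l:ℝ)) • lfC f η q p l‖) (L * η * (j:ℝ)^2 / 2) hterm
            rw [nsmul_eq_mul] at h1
            exact h1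
        _ ≤ (j:ℝ) * (L * η * (j:ℝ)^2 / 2) := by
            have : ((Finset.Ico 1 j).card : ℝ) ≤ (j:ℝ) := by
              rw [Nat.card_Ico]
              exact_mod_cast Nat.sub_le j 1
            nlinarith [sq_nonneg (j:ℝ), mul_nonneg (mul_nonneg hL0 hη) (sq_nonneg (j:ℝ))]
    have hj1' : (1:ℝ) ≤ (j:ℝ) := by exact_mod_cast hj1
    have h0 := norm_smul_le (η^2) (∑ l ∈ Finset.Ico 1 j, ((j:ℝ) - (l:ℝ)) • lfC f η q p l)
    have h2 : ‖η^2‖ = η^2 := by rw [Real.norm_eq_abs, abs_of_nonneg (by positivity)]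
    rw [h2] at h0
    nlinarith [norm_nonneg (∑ l ∈ Finset.Ico 1 j, ((j:ℝ) - (l:ℝ)) • lfC f η q p l), sq_nonneg η,
      mul_nonneg (mul_nonneg hL0 hη) (sq_nonneg (j:ℝ))]

end LeapfrogAux
end

open LeapfrogAux in
/-- **Lemma (Jacobian of the leapfrog position map in the momentum variable).** -/
theorem leapfrog_momentum_jacobian {d : ℕ} (f : Euc d → ℝ) (L η : ℝ) (K : ℕ)
    (hf : ContDiff ℝ 2 f) (hL : LSmooth f L) (hK : 1 ≤ K) (hη : 0 < η)
    (hstep : (K : ℝ) * η * L ^ ((1:ℝ)/2) ≤ 1/4) :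
    -- the position map and its Jacobian in `p`
    let F : ℕ → Euc d → Euc d → Euc d := fun j q p => (leapfrog f η j (q, p)).1
    let D2F : ℕ → Euc d → Euc d → (Euc d →L[ℝ] Euc d) :=
      fun j q p => fderiv ℝ (fun p' => F j q p') p
    -- (i) recursion formula
    (∀ j, 1 ≤ j → j ≤ K → ∀ q p : Euc d,
      D2F j q p = ((j : ℝ) * η) • ContinuousLinearMap.id ℝ (Euc d)
        - η^2 • ∑ l ∈ Finset.Ico 1 j,
            ((j : ℝ) - (l : ℝ)) • ((fderiv ℝ (gradient f) (F l q p)).comp (D2F l q p))) ∧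
    -- (ii) operator norm bound
    (∀ j, 1 ≤ j → j ≤ K → ∀ q p : Euc d,
      ‖D2F j q p - ((j : ℝ) * η) • ContinuousLinearMap.id ℝ (Euc d)‖
        ≤ (j : ℝ)^3 * η^3 * L) ∧
    (∀ q p : Euc d,
      ‖D2F K q p - ((K : ℝ) * η) • ContinuousLinearMap.id ℝ (Euc d)‖ ≤ (K : ℝ) * η / 16) ∧
    -- invertibility of `p ↦ F K q p` and eigenvalue bounds on the inverse's Jacobian
    (∃ G : Euc d → Euc d → Euc d,
      (∀ q p : Euc d, G q (F K q p) = p) ∧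
      (∀ q y : Euc d, F K q (G q y) = y) ∧
      (∀ q y : Euc d,
        ∀ z ∈ spectrum ℂ
          ((Matrix.of fun i j : Fin d =>
              (fderiv ℝ (G q) y) (EuclideanSpace.single j 1) i).map Complex.ofReal),
          16 / (17 * (K : ℝ) * η) ≤ ‖z‖ ∧
          ‖z‖ ≤ 16 / (15 * (K : ℝ) * η))) := by
  intro F D2F
  have hL0 : 0 ≤ L := le_trans (norm_nonneg _) (hL 0)
  have hK0 : (0:ℝ) < (K:ℝ) := by exact_mod_cast Nat.lt_of_lt_of_le Nat.zero_lt_one hK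
  have hc0 : (0:ℝ) < (K:ℝ) * η := mul_pos hK0 hη
  have hsmall : (K:ℝ)^2 * η^2 * L ≤ 1/16 := by
    rw [← Real.sqrt_eq_rpow] at hstep
    have h4 : 0 ≤ (K:ℝ) * η * Real.sqrt L := by positivity
    have h5 : ((K:ℝ)*η*Real.sqrt L)^2 ≤ (1/4)^2 := pow_le_pow_left₀ h4 hstep 2
    have h6 : ((K:ℝ)*η*Real.sqrt L)^2 = (K:ℝ)^2*η^2*L := by
      rw [mul_pow, mul_pow, Real.sq_sqrt hL0]
    nlinarith
  have hfd : ∀ (j : ℕ) (q p : Euc d),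
      fderiv ℝ (fun p' => (leapfrog f η j (q, p')).1) p = (lfD f η q p j).1 :=
    fun j q p => ((lf_hasderiv hf η q j p).1.hasFDerivAt).fderiv
  have part2 : ∀ j, 1 ≤ j → j ≤ K → ∀ q p : Euc d,
      ‖fderiv ℝ (fun p' => (leapfrog f η j (q, p')).1) p
        - ((j : ℝ) * η) • ContinuousLinearMap.id ℝ (Euc d)‖ ≤ (j : ℝ)^3 * η^3 * L := by
    intro j hj1 hjK q p
    rw [hfd j q p]
    exact lfD_bound f L η K q p hL hL0 hη.le hsmall j hj1 hjK
  have hc16 : (K:ℝ)^3 * η^3 * L ≤ (K:ℝ) * η / 16 := by nlinarith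
  have hEb : ∀ q p : Euc d,
      ‖(lfD f η q p K).1 - ((K:ℝ) * η) • ContinuousLinearMap.id ℝ (Euc d)‖ ≤ (K:ℝ)*η/16 := by
    intro q p
    refine le_trans ?_ hc16
    have := part2 K hK le_rfl q p
    rwa [hfd K q p] at this
  refine ⟨?_, part2, ?_, ?_⟩
  · -- (i)
    intro j hj1 hjK q p
    show fderiv ℝ (fun p' => (leapfrog f η j (q, p')).1) p = _
    rw [hfd j q p, (lfD_closed f η q p j).1]
    congr 1
    congr 1
    apply Finset.sum_congr rfl
    intro l _
    show _ = ((j : ℝ) - (l : ℝ)) • ((fderiv ℝ (gradient f) ((leapfrog f η l (q, p)).1)).comp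
      (fderiv ℝ (fun p' => (leapfrog f η l (q, p')).1) p))
    rw [hfd l q p]
    rfl
  · -- (iii)
    intro q p
    show ‖fderiv ℝ (fun p' => (leapfrog f η K (q, p')).1) p - _‖ ≤ _
    rw [hfd K q p]
    exact hEb q p
  · -- (iv)
    set c : ℝ := (K:ℝ) * η with hcdef
    -- pointwise bounds on the Jacobian
    have hdiff : ∀ (q p x : Euc d), ‖(lfD f η q p K).1 x - c • x‖ ≤ (c/16) * ‖x‖ := by
      intro q p x
      have h1 := ContinuousLinearMap.le_opNorm
        ((lfD f η q p K).1 - c • ContinuousLinearMap.id ℝ (Euc d)) x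
      have h2 : ((lfD f η q p K).1 - c • ContinuousLinearMap.id ℝ (Euc d)) x
          = (lfD f η q p K).1 x - c • x := by simp
      rw [h2] at h1
      have := hEb q p
      nlinarith [norm_nonneg x]
    have hlow : ∀ (q p x : Euc d), (15*c/16) * ‖x‖ ≤ ‖(lfD f η q p K).1 x‖ := by
      intro q p x
      have h1 := hdiff q p x
      have h3 : ‖c • x‖ ≤ ‖(lfD f η q p K).1 x‖ + ‖(lfD f η q p K).1 x - c • x‖ := by
        calc ‖c • x‖ = ‖(lfD f η q p K).1 x - ((lfD f η q p K).1 x - c • x)‖ := by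
              congr 1; module
          _ ≤ _ := norm_sub_le _ _
      have h4 : ‖c • x‖ = c * ‖x‖ := by
        rw [norm_smul, Real.norm_eq_abs, abs_of_pos hc0]
      linarith
    have hup : ∀ (q p x : Euc d), ‖(lfD f η q p K).1 x‖ ≤ (17*c/16) * ‖x‖ := by
      intro q p x
      have h1 := hdiff q p x
      have h3 : ‖(lfD f η q p K).1 x‖ ≤ ‖(lfD f η q p K).1 x - c • x‖ + ‖c • x‖ := by
        calc ‖(lfD f η q p K).1 x‖ = ‖((lfD f η q p K).1 x - c • x) + c • x‖ := by
              congr 1; module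
          _ ≤ _ := norm_add_le _ _
      have h4 : ‖c • x‖ = c * ‖x‖ := by
        rw [norm_smul, Real.norm_eq_abs, abs_of_pos hc0]
      linarith
    have hAinj : ∀ q p : Euc d, Function.Injective ((lfD f η q p K).1) := by
      intro q p x y hxy
      have h1 := hlow q p (x - y)
      rw [map_sub, hxy, sub_self, norm_zero] at h1
      have h2 : ‖x - y‖ ≤ 0 := by nlinarith [norm_nonneg (x - y)]
      have h3 : ‖x - y‖ = 0 := le_antisymm h2 (norm_nonneg _)
      exact sub_eq_zero.mp (norm_eq_zero.mp h3)
    have hAsurj : ∀ q p : Euc d, Function.Surjective ((lfD f η q p K).1) := fun q p =>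
      LinearMap.injective_iff_surjective.mp (hAinj q p)
    -- approximation by the scaled identity
    have hcinv : ∀ x : Euc d, (c⁻¹ • ContinuousLinearMap.id ℝ (Euc d))
        ((c • ContinuousLinearMap.id ℝ (Euc d)) x) = x := by
      intro x
      simp [smul_smul, inv_mul_cancel₀ (ne_of_gt hc0), mul_inv_cancel₀ (ne_of_gt hc0)]
    have hcinv' : ∀ x : Euc d, (c • ContinuousLinearMap.id ℝ (Euc d))
        ((c⁻¹ • ContinuousLinearMap.id ℝ (Euc d)) x) = x := by
      intro x
      simp [smul_smul, inv_mul_cancel₀ (ne_of_gt hc0), mul_inv_cancel₀ (ne_of_gt hc0)]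
    set ce : Euc d ≃L[ℝ] Euc d := ContinuousLinearEquiv.equivOfInverse
      (c • ContinuousLinearMap.id ℝ (Euc d)) (c⁻¹ • ContinuousLinearMap.id ℝ (Euc d))
      hcinv hcinv' with hce
    have hap : ∀ q : Euc d, ApproximatesLinearOn (fun p => (leapfrog f η K (q, p)).1)
        ((ce : Euc d →L[ℝ] Euc d)) Set.univ ((c/16).toNNReal) := by
      intro q x _ y _
      have hφ : ∀ p' : Euc d, p' ∈ Set.univ → HasFDerivWithinAt
          (fun p => (leapfrog f η K (q, p)).1 - c • p)
          ((lfD f η q p' K).1 - c • ContinuousLinearMap.id ℝ (Euc d)) Set.univ p' := fun p' _ =>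
        (((lf_hasderiv hf η q K p').1.hasFDerivAt).sub
          ((hasFDerivAt_id p').const_smul c)).hasFDerivWithinAt
      have hmvt := convex_univ.norm_image_sub_le_of_norm_hasFDerivWithin_le hφ
        (fun p' _ => hEb q p') (Set.mem_univ y) (Set.mem_univ x)
      have he : (fun p => (leapfrog f η K (q, p)).1 - c • p) x
          - (fun p => (leapfrog f η K (q, p)).1 - c • p) y
          = (leapfrog f η K (q, x)).1 - (leapfrog f η K (q, y)).1
              - (ce : Euc d →L[ℝ] Euc d) (x - y) := by
        have hcex : (ce : Euc d →L[ℝ] Euc d) (x - y) = c • (x - y) := rfl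
        rw [hcex]
        simp only []
        module
      rw [he] at hmvt
      have hco : ((c/16).toNNReal : ℝ) = c/16 := Real.coe_toNNReal _ (by positivity)
      rw [hco]
      exact hmvt
    have hcnn : Subsingleton (Euc d) ∨
        (c/16).toNNReal < ‖((ce.symm : Euc d →L[ℝ] Euc d))‖₊⁻¹ := by
      by_cases hsub : Subsingleton (Euc d)
      · exact Or.inl hsub
      · right
        have hnt : Nontrivial (Euc d) := not_subsingleton_iff_nontrivial.mp hsub
        have hsymm : (ce.symm : Euc d →L[ℝ] Euc d) = c⁻¹ • ContinuousLinearMap.id ℝ (Euc d) := rfl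
        have hnorm : ‖(ce.symm : Euc d →L[ℝ] Euc d)‖ = c⁻¹ := by
          rw [hsymm, norm_smul c⁻¹ (ContinuousLinearMap.id ℝ (Euc d)), Real.norm_eq_abs, abs_of_pos (inv_pos.mpr hc0),
            ContinuousLinearMap.norm_id, mul_one]
        rw [← NNReal.coe_lt_coe]
        rw [Real.coe_toNNReal _ (by positivity : (0:ℝ) ≤ c/16)]
        rw [NNReal.coe_inv, coe_nnnorm, hnorm, inv_inv]
        linarith
    have hinj : ∀ q : Euc d, Function.Injective (fun p => (leapfrog f η K (q, p)).1) := by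
      intro q a b hab
      exact (hap q).injOn hcnn (Set.mem_univ a) (Set.mem_univ b) hab
    have hsurjg : ∀ q : Euc d, Function.Surjective (fun p => (leapfrog f η K (q, p)).1) :=
      fun q => (hap q).surjective hcnn
    refine ⟨fun q y => Function.invFun (fun p => (leapfrog f η K (q, p)).1) y,
      fun q p => Function.leftInverse_invFun (hinj q) p,
      fun q y => Function.rightInverse_invFun (hsurjg q) y, ?_⟩
    intro q y z hz
    set p₀ : Euc d := Function.invFun (fun p => (leapfrog f η K (q, p)).1) y with hp₀
    have hgp : (leapfrog f η K (q, p₀)).1 = y :=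
      Function.rightInverse_invFun (hsurjg q) y
    set A : Euc d →L[ℝ] Euc d := (lfD f η q p₀ K).1 with hA
    set A' : Euc d ≃L[ℝ] Euc d := (LinearEquiv.ofBijective (A : Euc d →ₗ[ℝ] Euc d)
      ⟨hAinj q p₀, hAsurj q p₀⟩).toContinuousLinearEquiv with hA'
    have hA'c : (A' : Euc d →L[ℝ] Euc d) = A := by ext x; rfl
    have hstrict : HasStrictFDerivAt (fun p => (leapfrog f η K (q, p)).1)
        ((A' : Euc d →L[ℝ] Euc d)) p₀ := by
      rw [hA'c]; exact (lf_hasderiv hf η q K p₀).1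
    have hGev : ∀ᶠ x in nhds p₀,
        Function.invFun (fun p => (leapfrog f η K (q, p)).1) ((leapfrog f η K (q, x)).1) = x :=
      Filter.Eventually.of_forall (fun x => Function.leftInverse_invFun (hinj q) x)
    have hGs := hstrict.to_local_left_inverse hGev
    have hfdG : fderiv ℝ (Function.invFun (fun p => (leapfrog f η K (q, p)).1)) y
        = (A'.symm : Euc d →L[ℝ] Euc d) := by
      rw [← hgp]
      exact hGs.hasFDerivAt.fderiv
    have hz' : z ∈ spectrum ℂ ((Matrix.of fun i j : Fin d =>
        (A'.symm : Euc d →L[ℝ] Euc d) (EuclideanSpace.single j 1) i).map Complex.ofReal) := by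
      rw [← hfdG]
      exact hz
    -- upper bound
    have hABx : ∀ x : Euc d, A ((A'.symm : Euc d →L[ℝ] Euc d) x) = x := by
      intro x
      rw [← hA'c]
      exact A'.apply_symm_apply x
    have hBAx : ∀ x : Euc d, (A'.symm : Euc d →L[ℝ] Euc d) (A x) = x := by
      intro x
      rw [← hA'c]
      exact A'.symm_apply_apply x
    have hB : ∀ x : Euc d, ‖(A'.symm : Euc d →L[ℝ] Euc d) x‖ ≤ (16/(15*c)) * ‖x‖ := by
      intro x
      have h1 := hlow q p₀ ((A'.symm : Euc d →L[ℝ] Euc d) x)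
      rw [show (lfD f η q p₀ K).1 ((A'.symm : Euc d →L[ℝ] Euc d) x) = x from hABx x] at h1
      have h2 : (0:ℝ) < 15*c/16 := by positivity
      rw [show (16/(15*c)) * ‖x‖ = ‖x‖ / (15*c/16) by field_simp]
      rw [le_div_iff₀ h2]
      linarith [h1]
    have hub := spec_abs_le (A'.symm : Euc d →L[ℝ] Euc d) (16/(15*c)) hB hz'
    -- lower bound
    have hA17 : ∀ x : Euc d, ‖A x‖ ≤ (17*c/16) * ‖x‖ := fun x => hup q p₀ x
    have hBA : (Matrix.of fun i j : Fin d =>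
          (A'.symm : Euc d →L[ℝ] Euc d) (EuclideanSpace.single j 1) i) *
        (Matrix.of fun i j : Fin d => A (EuclideanSpace.single j 1) i) = 1 :=
      matrix_inv_pair _ _ hBAx
    have hAB : (Matrix.of fun i j : Fin d => A (EuclideanSpace.single j 1) i) *
        (Matrix.of fun i j : Fin d =>
          (A'.symm : Euc d →L[ℝ] Euc d) (EuclideanSpace.single j 1) i) = 1 :=
      matrix_inv_pair _ _ hABx
    set MBc := (Matrix.of fun i j : Fin d =>
      (A'.symm : Euc d →L[ℝ] Euc d) (EuclideanSpace.single j 1) i).map Complex.ofReal with hMBc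
    set MAc := (Matrix.of fun i j : Fin d =>
      A (EuclideanSpace.single j 1) i).map Complex.ofReal with hMAc
    have cBA : MBc * MAc = 1 := map_ofReal_eq_one _ _ hBA
    have cAB : MAc * MBc = 1 := map_ofReal_eq_one _ _ hAB
    set uB : (Matrix (Fin d) (Fin d) ℂ)ˣ := ⟨MBc, MAc, cBA, cAB⟩ with huB
    have hz0 : z ≠ 0 := by
      intro h0
      rw [h0] at hz'
      exact (spectrum.zero_mem_iff (R := ℂ)).mp hz' ⟨uB, rfl⟩
    have hinvz : z⁻¹ ∈ spectrum ℂ MAc := by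
      have h := (spectrum.inv_mem_iff (r := Units.mk0 z hz0) (a := uB)).mp hz'
      have e1 : (((Units.mk0 z hz0)⁻¹ : ℂˣ) : ℂ) = z⁻¹ := by simp
      have e2 : ((uB⁻¹ : (Matrix (Fin d) (Fin d) ℂ)ˣ) : Matrix (Fin d) (Fin d) ℂ) = MAc := rfl
      rw [e1, e2] at h
      exact h
    have hlb := spec_abs_le A (17*c/16) hA17 hinvz
    rw [norm_inv] at hlb
    have habs : 0 < ‖z‖ := norm_pos_iff.mpr hz0
    constructor
    · rw [show (17:ℝ) * (K:ℝ) * η = 17 * c by rw [hcdef]; ring]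
      rw [div_le_iff₀ (by positivity : (0:ℝ) < 17*c)]
      have h5 := mul_le_mul_of_nonneg_left hlb (le_of_lt habs)
      rw [mul_inv_cancel₀ (ne_of_gt habs)] at h5
      nlinarith
    · rw [show (15:ℝ) * (K:ℝ) * η = 15 * c by rw [hcdef]; ring]
      exact hub
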